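/- Second syzygies are joins of first syzygies: for a finitely presented multiparameter persistence module M, if s is a grade in the support of the (j+1)-st multigraded Betti number ξ_{j+1}(M) for j ≥ 1, then there exist grades r_1, ..., r_m in the support of ξ_j(M) whose join (coordinatewise maximum) equals s. -/

import Mathlib

structure PMod (P : Type) [Preorder P] (K : Type) [Field K] where
  V : P → Type
  [addCommGroup : ∀ a, AddCommGroup (V a)]
  [module : ∀ a, Module K (V a)]
  map : ∀ a b : P, a ≤ b → (V a →ₗ[K] V b)
  map_refl : ∀ a, map a a le_rfl = LinearMap.id
  map_comp : ∀ a b c (hab : a ≤ b) (hbc : b ≤ c),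
    (map b c hbc).comp (map a b hab) = map a c (hab.trans hbc)

attribute [instance] PMod.addCommGroup PMod.module

/-- The free multiparameter persistence module on the graded set `(ι, g)`:
at grade `a` it is the space of finitely supported families supported on the
generators whose grade lies below `a`. -/
noncomputable def freePMod {n : ℕ} (K : Type) [Field K] {ι : Type}
    (g : ι → (Fin n → ℝ)) : PMod (Fin n → ℝ) K where
  V a := ↥(Finsupp.supported K K {j | g j ≤ a})
  map a b h := Submodule.inclusion
    (Finsupp.supported_mono (fun j (hj : g j ≤ a) => hj.trans h))
  map_refl a := rfl
  map_comp a b c hab hbc := rfl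

/-- A morphism of persistence modules: a natural family of linear maps. -/
structure PHom {P : Type} [Preorder P] {K : Type} [Field K] (M N : PMod P K) where
  app : ∀ a, M.V a →ₗ[K] N.V a
  natural : ∀ a b (h : a ≤ b), (app b).comp (M.map a b h) = (N.map a b h).comp (app a)

/-- A free resolution of a multiparameter persistence module `M`: an exact sequence
`... → F₂ → F₁ → F₀ → M → 0` of free persistence modules. -/
structure FreeResolution {n : ℕ} {K : Type} [Field K] (M : PMod (Fin n → ℝ) K) where
  X : ℕ → Type
  gr : ∀ i, X i → (Fin n → ℝ)
  d : ∀ i, PHom (freePMod K (gr (i + 1))) (freePMod K (gr i))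
  aug : PHom (freePMod K (gr 0)) M
  aug_surj : ∀ a, LinearMap.range (aug.app a) = ⊤
  exact0 : ∀ a, LinearMap.range ((d 0).app a) = LinearMap.ker (aug.app a)
  exact : ∀ i a, LinearMap.range ((d (i + 1)).app a) = LinearMap.ker ((d i).app a)

/-- The graded piece at `a` of the submodule `I·F` of a free module `F`, where `I` is
the augmentation ideal generated by the monomials of strictly positive grade. -/
noncomputable def augIdealPiece {n : ℕ} {K : Type} [Field K] {ι : Type}
    (g : ι → (Fin n → ℝ)) (a : Fin n → ℝ) : Submodule K ((freePMod K g).V a) :=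
  Submodule.comap (Finsupp.supported K K {j | g j ≤ a}).subtype
    (Finsupp.supported K K {j | g j ≤ a ∧ g j ≠ a})

/-- A free resolution is minimal if `ker pᵢ ⊆ I·Fᵢ` for all `i`. -/
def FreeResolution.Minimal {n : ℕ} {K : Type} [Field K] {M : PMod (Fin n → ℝ) K}
    (F : FreeResolution M) : Prop :=
  (∀ a, LinearMap.ker (F.aug.app a) ≤ augIdealPiece (F.gr 0) a) ∧
  (∀ i a, LinearMap.ker ((F.d i).app a) ≤ augIdealPiece (F.gr (i + 1)) a)

/-- The basis element of a free persistence module corresponding to the generator `j`,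
at its own grade. -/
noncomputable def basisElt {n : ℕ} {K : Type} [Field K] {ι : Type}
    (g : ι → (Fin n → ℝ)) (j : ι) : (freePMod K g).V (g j) :=
  ⟨Finsupp.single j 1, Finsupp.single_mem_supported K 1 (le_refl (g j))⟩

/-- A multiparameter persistence module is finitely presented iff it is pointwise
finite dimensional and finitely determined by a finite grid of grades. -/
def FinitelyPresented {n : ℕ} {K : Type} [Field K] (M : PMod (Fin n → ℝ) K) : Prop :=
  ∃ S : Finset (Fin n → ℝ),
    (∀ a, FiniteDimensional K (M.V a)) ∧
    (∀ a b (h : a ≤ b), (∀ g ∈ S, g ≤ a ↔ g ≤ b) → Function.Bijective (M.map a b h)) ∧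
    (∀ a, (∀ g ∈ S, ¬ g ≤ a) → ∀ x : M.V a, x = 0)

/-- Higher syzygies are joins of lower syzygies: for a finitely presented
multiparameter persistence module `M` with a minimal free resolution, if `s` is a
generator in homological degree `j + 1` with `j ≥ 1`, then its grade is the join
(coordinatewise maximum) of the grades of finitely many degree-`j` generators. -/
theorem syzygy_grade_is_join {n : ℕ} {K : Type} [Field K]
    (M : PMod (Fin n → ℝ) K) (hfp : FinitelyPresented M)
    (F : FreeResolution M) (hfin : ∀ i, Finite (F.X i)) (hmin : F.Minimal)
    (j : ℕ) (hj : 1 ≤ j) (s : F.X (j + 1)) :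
    ∃ (m : ℕ) (_ : 0 < m) (rs : Fin m → F.X j),
      F.gr (j + 1) s = fun i => ⨆ t, F.gr j (rs t) i := by
  obtain ⟨i, rfl⟩ : ∃ i, j = i + 1 := ⟨j - 1, (Nat.succ_pred_eq_of_pos hj).symm⟩
  classical
  set a := F.gr (i + 2) s with ha
  set v := (F.d (i + 1)).app a (basisElt (F.gr (i + 2)) s) with hv
  -- v ≠ 0 by minimality
  have hbsupp : (basisElt (K := K) (F.gr (i + 2)) s).1 = Finsupp.single s 1 := rfl
  have hvne : v ≠ 0 := by
    intro h
    have hmem := hmin.2 (i + 1) a (LinearMap.mem_ker.mpr h)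
    rw [augIdealPiece] at hmem
    replace hmem := Submodule.mem_comap.mp hmem
    rw [Finsupp.mem_supported] at hmem
    have hs : s ∈ ((basisElt (K := K) (F.gr (i + 2)) s).1).support := by
      rw [hbsupp]
      simp [Finsupp.support_single_ne_zero s (one_ne_zero (α := K))]
    exact (hmem hs).2 rfl
  -- v is in the kernel of d i
  have hvker : (F.d i).app a v = 0 := by
    have : v ∈ LinearMap.ker ((F.d i).app a) := by
      rw [← F.exact i a]
      exact ⟨basisElt (F.gr (i + 2)) s, rfl⟩
    exact this
  -- support of v
  have hv1ne : (v.1 : F.X (i + 1) →₀ K) ≠ 0 := fun h => hvne (Subtype.ext h)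
  set T := (v.1 : F.X (i + 1) →₀ K).support with hTdef
  have hT : T.Nonempty := Finsupp.support_nonempty_iff.mpr hv1ne
  have hm : 0 < T.card := Finset.card_pos.mpr hT
  haveI : Nonempty (Fin T.card) := ⟨⟨0, hm⟩⟩
  set rs : Fin T.card → F.X (i + 1) := fun t => (T.equivFin.symm t : F.X (i + 1)) with hrs
  set b : Fin n → ℝ := fun k => ⨆ t, F.gr (i + 1) (rs t) k with hb
  -- grades of support elements are ≤ a
  have hsupp_le : ∀ r ∈ T, F.gr (i + 1) r ≤ a := fun r hr => v.2 hr
  -- b ≤ a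
  have hble : b ≤ a := fun k => ciSup_le fun t => hsupp_le _ (Finset.coe_mem _) k
  -- each support grade ≤ b
  have hrb : ∀ r ∈ T, F.gr (i + 1) r ≤ b := by
    intro r hr k
    have := le_ciSup (f := fun t => F.gr (i + 1) (rs t) k)
      (Set.Finite.bddAbove (Set.finite_range _)) (T.equivFin ⟨r, hr⟩)
    simpa [hrs] using this
  -- main claim: b = a
  have hba : b = a := by
    by_contra hne
    have hnab : ¬ a ≤ b := fun h => hne (le_antisymm hble h)
    -- lift v to grade b
    set v' : (freePMod K (F.gr (i + 1))).V b :=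
      ⟨(v.1 : F.X (i + 1) →₀ K), (Finsupp.mem_supported K _).mpr (fun r hr => hrb r hr)⟩ with hv'
    have hmapv : (freePMod K (F.gr (i + 1))).map b a hble v' = v :=
      Subtype.ext rfl
    -- v' is in the kernel of d i at grade b
    have hv'ker : (F.d i).app b v' = 0 := by
      have hnat := congrArg (fun φ => φ v') ((F.d i).natural b a hble)
      simp only [LinearMap.comp_apply] at hnat
      rw [hmapv, hvker] at hnat
      have hinj := Submodule.inclusion_injective
        (Finsupp.supported_mono (fun r (hr : F.gr i r ≤ b) => hr.trans hble) :
          Finsupp.supported K K {r | F.gr i r ≤ b} ≤ _)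
      exact hinj (hnat.symm.trans (map_zero _).symm)
    -- exactness at b gives a preimage w
    obtain ⟨w, hw⟩ : v' ∈ LinearMap.range ((F.d (i + 1)).app b) := by
      rw [F.exact i b]; exact hv'ker
    -- x := basisElt s - incl w is in ker d (i+1) at a
    set x : (freePMod K (F.gr (i + 2))).V a :=
      basisElt (F.gr (i + 2)) s - (freePMod K (F.gr (i + 2))).map b a hble w with hx
    have hxker : (F.d (i + 1)).app a x = 0 := by
      have hnat := congrArg (fun φ => φ w) ((F.d (i + 1)).natural b a hble)
      simp only [LinearMap.comp_apply] at hnat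
      rw [hw, hmapv] at hnat
      rw [hx, map_sub, hnat, ← hv, sub_self]
    have hmem := hmin.2 (i + 1) a (LinearMap.mem_ker.mpr hxker)
    rw [augIdealPiece] at hmem
    replace hmem := Submodule.mem_comap.mp hmem
    rw [Finsupp.mem_supported] at hmem
    -- coefficient of x at s is 1
    have hws : (w.1 : F.X (i + 2) →₀ K) s = 0 := by
      by_contra hws
      exact hnab ((Finsupp.mem_supported K _).mp w.2 (Finsupp.mem_support_iff.mpr hws))
    have hxs : (x.1 : F.X (i + 2) →₀ K) s = 1 := by
      have hcoe : (x.1 : F.X (i + 2) →₀ K) =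
          Finsupp.single s 1 - (w.1 : F.X (i + 2) →₀ K) := by
        rw [hx]; rfl
      rw [hcoe]
      simp [Finsupp.single_apply, hws]
    have hs : s ∈ ((x.1 : F.X (i + 2) →₀ K)).support :=
      Finsupp.mem_support_iff.mpr (by rw [hxs]; exact one_ne_zero)
    exact (hmem hs).2 rfl
  exact ⟨T.card, hm, rs, hba.symm⟩
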